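/- Let (R, m) be a local Artinian ring, I a nonzero proper ideal of R, and a, b ∈ R. Then the ring R(I)_{a,b} is not Gorenstein. -/

import Mathlib

open IsLocalRing

universe u

/-! ### The family of rings `R(I)_{a,b}`

`RIab R I a b` is the quotient of the Rees algebra `⊕ₙ Iⁿtⁿ` by the contraction of the
ideal generated by `t² + a t + b`.  As an `R`-module it is `R ⊕ I`; we realize it as the
type of pairs `r + i t` with `r ∈ R`, `i ∈ I`, with multiplication
`(r + i t)(s + j t) = (r s - b i j) + (r j + s i - a i j) t`. -/
@[ext]
structure RIab (R : Type u) [CommRing R] (I : Ideal R) (a b : R) : Type u where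
  r : R
  i : R
  hi : i ∈ I

namespace RIab

variable {R : Type u} [CommRing R] {I : Ideal R} {a b : R}

instance : Zero (RIab R I a b) := ⟨⟨0, 0, I.zero_mem⟩⟩
instance : One (RIab R I a b) := ⟨⟨1, 0, I.zero_mem⟩⟩
instance : Add (RIab R I a b) := ⟨fun x y => ⟨x.r + y.r, x.i + y.i, I.add_mem x.hi y.hi⟩⟩
instance : Neg (RIab R I a b) := ⟨fun x => ⟨-x.r, -x.i, I.neg_mem x.hi⟩⟩
instance : Mul (RIab R I a b) :=
  ⟨fun x y => ⟨x.r * y.r - b * (x.i * y.i),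
    x.r * y.i + y.r * x.i - a * (x.i * y.i),
    I.sub_mem (I.add_mem (I.mul_mem_left _ y.hi) (I.mul_mem_left _ x.hi))
      (I.mul_mem_left _ (I.mul_mem_left _ y.hi))⟩⟩

@[simp] lemma zero_r : (0 : RIab R I a b).r = 0 := rfl
@[simp] lemma zero_i : (0 : RIab R I a b).i = 0 := rfl
@[simp] lemma one_r : (1 : RIab R I a b).r = 1 := rfl
@[simp] lemma one_i : (1 : RIab R I a b).i = 0 := rfl
@[simp] lemma add_r (x y : RIab R I a b) : (x + y).r = x.r + y.r := rfl
@[simp] lemma add_i (x y : RIab R I a b) : (x + y).i = x.i + y.i := rfl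
@[simp] lemma neg_r (x : RIab R I a b) : (-x).r = -x.r := rfl
@[simp] lemma neg_i (x : RIab R I a b) : (-x).i = -x.i := rfl
@[simp] lemma mul_r (x y : RIab R I a b) : (x * y).r = x.r * y.r - b * (x.i * y.i) := rfl
@[simp] lemma mul_i (x y : RIab R I a b) :
    (x * y).i = x.r * y.i + y.r * x.i - a * (x.i * y.i) := rfl

instance instCommRing : CommRing (RIab R I a b) where
  add_assoc x y z := by ext <;> simp <;> ring
  zero_add x := by ext <;> simp
  add_zero x := by ext <;> simp
  add_comm x y := by ext <;> simp <;> ring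
  neg_add_cancel x := by ext <;> simp
  mul_assoc x y z := by ext <;> simp <;> ring
  one_mul x := by ext <;> simp
  mul_one x := by ext <;> simp
  left_distrib x y z := by ext <;> simp <;> ring
  right_distrib x y z := by ext <;> simp <;> ring
  zero_mul x := by ext <;> simp
  mul_zero x := by ext <;> simp
  mul_comm x y := by ext <;> simp <;> ring
  nsmul := nsmulRec
  zsmul := zsmulRec

/-- The canonical ring homomorphism `R → R(I)_{a,b}`, `r ↦ r + 0·t`. -/
def C : R →+* RIab R I a b where
  toFun r := ⟨r, 0, I.zero_mem⟩
  map_one' := rfl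
  map_mul' x y := by ext <;> simp
  map_zero' := rfl
  map_add' x y := by ext <;> simp

instance instAlgebra : Algebra R (RIab R I a b) := (C (I := I) (a := a) (b := b)).toAlgebra

@[simp] lemma algebraMap_r (c : R) : (algebraMap R (RIab R I a b) c).r = c := rfl
@[simp] lemma algebraMap_i (c : R) : (algebraMap R (RIab R I a b) c).i = 0 := rfl

instance [Nontrivial R] : Nontrivial (RIab R I a b) :=
  ⟨⟨0, 1, fun h => zero_ne_one (congrArg RIab.r h)⟩⟩

variable [IsLocalRing R]

lemma isUnit_of_isUnit_r (hI : I ≠ ⊤) {x : RIab R I a b} (hx : IsUnit x.r) : IsUnit x := by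
  have hiI : x.i ∈ maximalIdeal R := le_maximalIdeal hI x.hi
  have hdet : IsUnit (x.r * x.r - a * x.r * x.i + b * (x.i * x.i)) := by
    by_contra h
    have hmem : x.r * x.r - a * x.r * x.i + b * (x.i * x.i) ∈ maximalIdeal R := by
      rwa [IsLocalRing.mem_maximalIdeal, mem_nonunits_iff]
    have : x.r * x.r ∈ maximalIdeal R := by
      have := (maximalIdeal R).add_mem hmem
        ((maximalIdeal R).sub_mem
          ((maximalIdeal R).mul_mem_left (a * x.r) hiI)
          ((maximalIdeal R).mul_mem_left (b * x.i) hiI))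
      have h2 : x.r * x.r - a * x.r * x.i + b * (x.i * x.i) +
          (a * x.r * x.i - b * x.i * x.i) = x.r * x.r := by ring
      rwa [h2] at this
    exact (IsLocalRing.mem_maximalIdeal _).mp this (hx.mul hx)
  obtain ⟨v, hv⟩ := hdet.exists_left_inv
  refine IsUnit.of_mul_eq_one (a := x) ⟨v * (x.r - a * x.i), v * (-x.i),
    I.mul_mem_left _ (I.neg_mem x.hi)⟩ ?_
  ext
  · show x.r * (v * (x.r - a * x.i)) - b * (x.i * (v * (-x.i))) = 1
    linear_combination hv
  · show x.r * (v * (-x.i)) + v * (x.r - a * x.i) * x.i - a * (x.i * (v * (-x.i))) = 0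
    ring

instance instIsLocalRing [Fact (I ≠ ⊤)] : IsLocalRing (RIab R I a b) := by
  refine IsLocalRing.of_isUnit_or_isUnit_one_sub_self fun x => ?_
  by_cases hx : IsUnit x.r
  · exact Or.inl (isUnit_of_isUnit_r Fact.out hx)
  · refine Or.inr (isUnit_of_isUnit_r Fact.out ?_)
    have hxm : x.r ∈ maximalIdeal R := by rwa [IsLocalRing.mem_maximalIdeal, mem_nonunits_iff]
    show IsUnit (1 - x).r
    have : (1 - x).r = 1 - x.r := by
      show (1 + -x).r = 1 - x.r
      simp; ring
    rw [this]
    by_contra h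
    have : (1 : R) ∈ maximalIdeal R := by
      have h1 : 1 - x.r ∈ maximalIdeal R := by
        rwa [IsLocalRing.mem_maximalIdeal, mem_nonunits_iff]
      have := (maximalIdeal R).add_mem h1 hxm
      simpa using this
    exact (maximalIdeal.isMaximal R).ne_top ((Ideal.eq_top_iff_one _).mpr this)

lemma mem_maximalIdeal_iff [Fact (I ≠ ⊤)] (x : RIab R I a b) :
    x ∈ maximalIdeal (RIab R I a b) ↔ x.r ∈ maximalIdeal R := by
  constructor
  · intro hx
    rw [IsLocalRing.mem_maximalIdeal, mem_nonunits_iff] at hx ⊢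
    intro hr
    exact hx (isUnit_of_isUnit_r Fact.out hr)
  · intro hx
    rw [IsLocalRing.mem_maximalIdeal, mem_nonunits_iff] at hx ⊢
    intro hu
    obtain ⟨y, hy⟩ := hu.exists_right_inv
    refine hx ?_
    have h1 : x.r * y.r - b * (x.i * y.i) = 1 := congrArg RIab.r hy
    have hIm : x.i * y.i ∈ maximalIdeal R :=
      le_maximalIdeal Fact.out (I.mul_mem_right _ x.hi)
    by_contra h
    have hxm : x.r ∈ maximalIdeal R := by rwa [IsLocalRing.mem_maximalIdeal, mem_nonunits_iff]
    have : (1 : R) ∈ maximalIdeal R := by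
      rw [← h1]
      exact (maximalIdeal R).sub_mem ((maximalIdeal R).mul_mem_right _ hxm)
        ((maximalIdeal R).mul_mem_left _ hIm)
    exact (maximalIdeal.isMaximal R).ne_top ((Ideal.eq_top_iff_one _).mpr this)

lemma algebraMap_mem_nonZeroDivisors {u : R} (hu : u ∈ nonZeroDivisors R) :
    algebraMap R (RIab R I a b) u ∈ nonZeroDivisors (RIab R I a b) := by
  rw [mem_nonZeroDivisors_iff_right]
  intro x hx
  have h1 : x.r * u - b * (x.i * 0) = 0 := congrArg RIab.r hx
  have h2 : x.r * 0 + u * x.i - a * (x.i * 0) = 0 := congrArg RIab.i hx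
  simp only [mul_zero, sub_zero, zero_add] at h1 h2
  rw [mul_comm] at h2
  ext
  · exact (mem_nonZeroDivisors_iff_right.mp hu) _ h1
  · exact (mem_nonZeroDivisors_iff_right.mp hu) _ h2

/-- The induced homomorphism between total quotient rings `Q(R) → Q(R(I)_{a,b})`. -/
noncomputable def mapFrac (I : Ideal R) (a b : R) :
    FractionRing R →+* FractionRing (RIab R I a b) :=
  IsLocalization.map (T := nonZeroDivisors (RIab R I a b)) _
    (algebraMap R (RIab R I a b)) (fun _ hu => algebraMap_mem_nonZeroDivisors hu)

/-- The element `t ∈ Q(R(I)_{a,b})`, realized as `(0 + i₀ t)/i₀` for a regular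
element `i₀ ∈ I`. -/
noncomputable def tau (I : Ideal R) (a b : R) (i₀ : R) (h : i₀ ∈ I)
    (hreg : i₀ ∈ nonZeroDivisors R) : FractionRing (RIab R I a b) :=
  IsLocalization.mk' _ (⟨0, i₀, h⟩ : RIab R I a b)
    (⟨algebraMap R (RIab R I a b) i₀, algebraMap_mem_nonZeroDivisors hreg⟩ :
      nonZeroDivisors (RIab R I a b))

end RIab

/-! ### Commutative-algebra notions used in the paper -/

instance (priority := 10) factMaximalIdealNeTop (R : Type u) [CommRing R] [IsLocalRing R] :
    Fact (maximalIdeal R ≠ ⊤) := ⟨(maximalIdeal.isMaximal R).ne_top⟩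

instance quotientIsLocalRing (R : Type u) [CommRing R] [IsLocalRing R] (I : Ideal R)
    [hI : Fact (I ≠ ⊤)] : IsLocalRing (R ⧸ I) :=
  have : Nontrivial (R ⧸ I) := Ideal.Quotient.nontrivial_iff.mpr hI.out
  IsLocalRing.of_surjective' (Ideal.Quotient.mk I) Ideal.Quotient.mk_surjective

section CA

variable (R : Type u) [CommRing R]

/-- The length `λ_R(M)` of an `R`-module, as the Krull dimension of its submodule lattice. -/
noncomputable def modLength (M : Type*) [AddCommGroup M] [Module R M] : ℕ∞ :=
  WithBot.unbotD 0 (Order.krullDim (Submodule R M))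

/-- `λ_R(A / B)` (more precisely `λ_R(A/(A ∩ B))`) for submodules `A B` of a module. -/
noncomputable def subquotLength {M : Type*} [AddCommGroup M] [Module R M]
    (A B : Submodule R M) : ℕ∞ :=
  modLength R (↥A ⧸ (Submodule.comap A.subtype B))

/-- The depth of a module over a local ring: the supremum of the lengths of (weakly)
regular sequences contained in the maximal ideal. -/
noncomputable def moduleDepth [IsLocalRing R] (M : Type*) [AddCommGroup M] [Module R M] : ℕ∞ :=
  sSup {n : ℕ∞ | ∃ rs : List R, (∀ x ∈ rs, x ∈ maximalIdeal R) ∧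
    RingTheory.Sequence.IsWeaklyRegular M rs ∧ (rs.length : ℕ∞) = n}

/-- A local ring is Cohen-Macaulay if its depth equals its Krull dimension. -/
def IsCohenMacaulayLocalRing [IsLocalRing R] : Prop :=
  (moduleDepth R R : WithBot ℕ∞) = ringKrullDim R

/-- A maximal Cohen-Macaulay module: finitely generated with depth equal to `dim R`. -/
def IsMaximalCohenMacaulay [IsLocalRing R] (M : Type*) [AddCommGroup M] [Module R M] : Prop :=
  Module.Finite R M ∧ (moduleDepth R M : WithBot ℕ∞) = ringKrullDim R

/-- A Cohen-Macaulay module: finitely generated with depth equal to its dimension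
`dim (R / ann M)`. -/
def IsCohenMacaulayModule [IsLocalRing R] (M : Type*) [AddCommGroup M] [Module R M] : Prop :=
  Module.Finite R M ∧
    (moduleDepth R M : WithBot ℕ∞) = ringKrullDim (R ⧸ Module.annihilator R M)

/-- The Krull dimension of a ring as a natural number. -/
noncomputable def krullDimNat : ℕ := ENat.toNat (WithBot.unbotD 0 (ringKrullDim R))

open CategoryTheory in
/-- `Ext^n_R(k, M)` where `k` is the residue field of the local ring `R`. -/
noncomputable def extResidue [IsLocalRing R] (M : Type u) [AddCommGroup M] [Module R M]
    (n : ℕ) : ModuleCat R :=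
  ((Ext R (ModuleCat.{u} R) n).obj
    (Opposite.op (ModuleCat.of R (ResidueField R)))).obj (ModuleCat.of R M)

/-- The Cohen-Macaulay type `t(R) = dim_k Ext^d_R(k, R)` of a local ring of dimension `d`. -/
noncomputable def CMtype [IsLocalRing R] : ℕ∞ :=
  modLength R (extResidue R R (krullDimNat R))

/-- A canonical module of a local ring: a finitely generated module `W` with
`dim_k Ext^i_R(k, W) = δ_{i, dim R}`. -/
def IsCanonicalModule [IsLocalRing R] (W : Type u) [AddCommGroup W] [Module R W] : Prop :=
  Module.Finite R W ∧ ∀ n : ℕ,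
    modLength R (extResidue R W n) = if n = krullDimNat R then 1 else 0

/-- A Gorenstein local ring: Cohen-Macaulay of type one. -/
def IsGorensteinLocalRing [IsLocalRing R] : Prop :=
  IsCohenMacaulayLocalRing R ∧ CMtype R = 1

/-- A regular local ring: Noetherian and the maximal ideal is generated by `dim R`
elements. -/
def IsRegularLocalRing' [IsLocalRing R] : Prop :=
  IsNoetherianRing R ∧ ∃ s : Finset R,
    Ideal.span (s : Set R) = maximalIdeal R ∧ (s.card : WithBot ℕ∞) = ringKrullDim R

/-- A complete intersection: the completion is a regular local ring modulo an ideal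
generated by a regular sequence. -/
def IsCompleteIntersectionLocalRing [IsLocalRing R] : Prop :=
  ∃ (T : Type u) (_ : CommRing T) (_ : IsLocalRing T),
    IsRegularLocalRing' T ∧ ∃ rs : List T, RingTheory.Sequence.IsRegular T rs ∧
      Nonempty ((AdicCompletion (maximalIdeal R) R) ≃+* (T ⧸ Ideal.ofList rs))

/-- The colon `(A : B) = {q ∈ Q | qB ⊆ A}` of two `R`-submodules of an `R`-algebra `Q`. -/
def qcolon {Q : Type*} [CommRing Q] [Algebra R Q] (A B : Submodule R Q) : Submodule R Q where
  carrier := {q | ∀ x ∈ B, q * x ∈ A}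
  add_mem' := fun {p q} hp hq x hx => by
    rw [add_mul]; exact A.add_mem (hp x hx) (hq x hx)
  zero_mem' := fun x hx => by rw [zero_mul]; exact A.zero_mem
  smul_mem' := fun c q hq x hx => by
    rw [Algebra.smul_mul_assoc]; exact A.smul_mem c (hq x hx)

/-- The image of an ideal in the total ring of fractions, as an `R`-submodule. -/
noncomputable def idealToFrac (J : Ideal R) : Submodule R (FractionRing R) :=
  Submodule.map (Algebra.linearMap R (FractionRing R)) J

/-- `z R` is a (minimal, i.e. principal) reduction of the fractional ideal `H`:
`z ∈ H` and `H^{n+1} = z H^n` for some `n`. -/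
def IsPrincipalReduction {Q : Type*} [CommRing Q] [Algebra R Q] (z : Q)
    (H : Submodule R Q) : Prop :=
  z ∈ H ∧ ∃ n : ℕ, H ^ (n + 1) = Submodule.span R {z} * H ^ n

/-- A one-dimensional local Cohen-Macaulay ring is almost Gorenstein if it has a canonical
module which is a fractional ideal `ω` with `R ⊆ ω ⊆ (m : m)`. -/
def IsAlmostGorensteinOneDim (S : Type u) [CommRing S] [IsLocalRing S] : Prop :=
  ∃ W : Submodule S (FractionRing S), IsFractional (nonZeroDivisors S) W ∧
    IsCanonicalModule S ↥W ∧ (1 : FractionRing S) ∈ W ∧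
    W * (Submodule.map (Algebra.linearMap S (FractionRing S)) (maximalIdeal S)) ≤
      Submodule.map (Algebra.linearMap S (FractionRing S)) (maximalIdeal S)

open Filter in
/-- The Hilbert-Samuel multiplicity `e⁰_m(C)` of a module `C` over a local ring,
defined as `lim_t d! · λ(C/m^t C) / t^d` where `d = dim C`. -/
noncomputable def hsMultiplicity (S : Type u) [CommRing S] [IsLocalRing S]
    (C : Type*) [AddCommGroup C] [Module S C] : ℝ :=
  limUnder atTop (fun t : ℕ =>
    ((Nat.factorial (krullDimNat (S ⧸ Module.annihilator S C)) *
        (modLength S (C ⧸ ((maximalIdeal S ^ t) • (⊤ : Submodule S C)))).toNat : ℕ) : ℝ) /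
      (t : ℝ) ^ (krullDimNat (S ⧸ Module.annihilator S C)))

/-- The minimal number of generators `μ(C) = λ(C / m C)` of a module over a local ring. -/
noncomputable def muGen (S : Type u) [CommRing S] [IsLocalRing S]
    (C : Type*) [AddCommGroup C] [Module S C] : ℕ∞ :=
  modLength S (C ⧸ ((maximalIdeal S) • (⊤ : Submodule S C)))

/-- A Cohen-Macaulay local ring possessing a canonical module is almost Gorenstein if there
is an exact sequence `0 → S → ω_S → C → 0` with `μ(C) = e⁰_m(C)` (Goto-Takahashi-Taniguchi). -/
def IsAlmostGorensteinLocalRing (S : Type u) [CommRing S] [IsLocalRing S] : Prop :=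
  ∃ W : ModuleCat.{u} S, IsCanonicalModule S W ∧
    ∃ f : S →ₗ[S] W, Function.Injective f ∧
      ∃ m : ℕ, muGen S (W ⧸ LinearMap.range f) = m ∧
        (m : ℝ) = hsMultiplicity S (W ⧸ LinearMap.range f)

/-- The height of an ideal: the infimum of the heights of the primes containing it. -/
noncomputable def idealHeight (J : Ideal R) : ℕ∞ :=
  ⨅ (p : PrimeSpectrum R) (_ : J ≤ p.asIdeal), Order.height p

end CA



/-! ### Auxiliary lemmas for stmt4 -/

section Stmt4Aux

open CategoryTheory Limits

universe v

noncomputable instance linearYonedaObjPreservesFiniteLimits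
    (S : Type u) [CommRing S] (Y : ModuleCat.{u} S) :
    PreservesFiniteLimits ((linearYoneda S (ModuleCat.{u} S)).obj Y) := by
  have h : PreservesLimits ((linearYoneda S (ModuleCat.{u} S)).obj Y ⋙
      forget₂ (ModuleCat.{u} S) AddCommGrpCat) :=
    preservesLimits_preadditiveYoneda_obj Y
  have := preservesLimits_of_reflects_of_preserves
    ((linearYoneda S (ModuleCat.{u} S)).obj Y) (forget₂ (ModuleCat.{u} S) AddCommGrpCat)
  exact this.preservesFiniteLimits

noncomputable instance linearYonedaObjRightOpPreservesFiniteColimits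
    (S : Type u) [CommRing S] (Y : ModuleCat.{u} S) :
    PreservesFiniteColimits ((linearYoneda S (ModuleCat.{u} S)).obj Y).rightOp :=
  preservesFiniteColimits_rightOp _

/-- `Ext⁰(X, Y) ≅ Hom(X, Y)`. -/
noncomputable def extZeroIso (S : Type u) [CommRing S] (X Y : ModuleCat.{u} S) :
    ((Ext S (ModuleCat.{u} S) 0).obj (Opposite.op X)).obj Y ≅ ModuleCat.of S (X ⟶ Y) :=
  (((((linearYoneda S (ModuleCat.{u} S)).obj Y).rightOp.leftDerivedZeroIsoSelf).app X).unop.symm :)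

/-- An Artinian local ring has Krull dimension zero. -/
lemma krullDimNat_eq_zero_of_artinian (S : Type u) [CommRing S] [IsLocalRing S]
    [IsArtinianRing S] : krullDimNat S = 0 := by
  have hu : Unique (PrimeSpectrum S) := by
    refine ⟨⟨⟨maximalIdeal S, (maximalIdeal.isMaximal S).isPrime⟩⟩, fun p => ?_⟩
    have hmax : p.asIdeal.IsMaximal := IsArtinianRing.isMaximal_of_isPrime p.asIdeal
    exact PrimeSpectrum.ext (IsLocalRing.eq_maximalIdeal hmax)
  have h0 : ringKrullDim S = 0 := Order.krullDim_eq_zero_of_unique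
  rw [krullDimNat, h0]
  rfl

/-- In an Artinian local ring, any nonzero ideal contains a nonzero socle element. -/
lemma exists_socle_elt (R : Type u) [CommRing R] [IsLocalRing R] [IsArtinianRing R]
    {I : Ideal R} (hI0 : I ≠ ⊥) :
    ∃ ε : R, ε ∈ I ∧ ε ≠ 0 ∧ ∀ c ∈ maximalIdeal R, ε * c = 0 := by
  classical
  obtain ⟨x, hxI, hx0⟩ := Submodule.exists_mem_ne_zero_of_ne_bot hI0
  obtain ⟨n, hn⟩ := IsArtinianRing.isNilpotent_jacobson_bot (R := R)
  rw [IsLocalRing.jacobson_eq_maximalIdeal ⊥ bot_ne_top] at hn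
  have hex : ∃ k : ℕ, maximalIdeal R ^ (k + 1) * Ideal.span {x} = ⊥ := by
    refine ⟨n, ?_⟩
    rw [pow_succ, hn]
    simp
  set k := Nat.find hex with hkdef
  have hk1 : maximalIdeal R ^ (k + 1) * Ideal.span {x} = ⊥ := Nat.find_spec hex
  have hkne : maximalIdeal R ^ k * Ideal.span {x} ≠ ⊥ := by
    rcases Nat.eq_zero_or_pos k with hk0 | hkpos
    · rw [hk0, pow_zero, one_mul]
      simpa [Ideal.span_singleton_eq_bot] using hx0
    · intro hbot
      have := Nat.find_min hex (m := k - 1) (by omega)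
      apply this
      have hk' : k - 1 + 1 = k := by omega
      rwa [hk']
  obtain ⟨ε, hε, hε0⟩ := Submodule.exists_mem_ne_zero_of_ne_bot hkne
  refine ⟨ε, ?_, hε0, fun c hc => ?_⟩
  · have h1 : maximalIdeal R ^ k * Ideal.span {x} ≤ Ideal.span {x} := Ideal.mul_le_right
    have h2 : Ideal.span {x} ≤ I := by rwa [Ideal.span_singleton_le_iff_mem]
    exact h2 (h1 hε)
  · have hmem : ε * c ∈ (maximalIdeal R ^ k * Ideal.span {x}) * maximalIdeal R :=
      Ideal.mul_mem_mul hε hc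
    have heq : (maximalIdeal R ^ k * Ideal.span {x}) * maximalIdeal R =
        maximalIdeal R ^ (k + 1) * Ideal.span {x} := by
      rw [pow_succ]
      ring
    rw [heq, hk1] at hmem
    simpa using hmem

namespace RIab

variable {R : Type u} [CommRing R] {I : Ideal R} {a b : R}

@[simp] lemma smul_r (c : R) (x : RIab R I a b) : (c • x).r = c * x.r := by
  rw [Algebra.smul_def]
  simp

@[simp] lemma smul_i (c : R) (x : RIab R I a b) : (c • x).i = c * x.i := by
  rw [Algebra.smul_def]
  simp

/-- The forgetful `R`-linear embedding `R(I)_{a,b} → R × R`. -/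
def toProd : RIab R I a b →ₗ[R] R × R where
  toFun x := (x.r, x.i)
  map_add' x y := rfl
  map_smul' c x := by ext <;> simp

instance instIsArtinianRing [IsArtinianRing R] : IsArtinianRing (RIab R I a b) := by
  have hinj : Function.Injective (toProd (R := R) (I := I) (a := a) (b := b)) := by
    intro x y h
    ext
    · exact congrArg Prod.fst h
    · exact congrArg Prod.snd h
  have h1 : IsArtinian R (RIab R I a b) := isArtinian_of_injective toProd hinj
  exact isArtinian_of_tower R h1

end RIab

end Stmt4Aux

/-- Theorem 1.6.  If `(R, m)` is a local Artinian ring and `I` a nonzero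
proper ideal, then `R(I)_{a,b}` is not Gorenstein. -/
theorem stmt4 (R : Type u) [CommRing R] [IsLocalRing R] [IsArtinianRing R]
    (I : Ideal R) (hI0 : I ≠ ⊥) [Fact (I ≠ ⊤)] (a b : R) :
    ¬ IsGorensteinLocalRing (RIab R I a b) := by
  classical
  rintro ⟨-, hType⟩
  set S := RIab R I a b with hS
  obtain ⟨ε, hεI, hε0, hεm⟩ := exists_socle_elt R hI0
  have hIm : I ≤ maximalIdeal R := le_maximalIdeal Fact.out
  have hk : krullDimNat S = 0 := krullDimNat_eq_zero_of_artinian S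
  unfold CMtype at hType
  rw [hk] at hType
  -- the two socle elements of `S`
  set x₁ : S := ⟨ε, 0, I.zero_mem⟩ with hx₁
  set x₂ : S := ⟨0, ε, hεI⟩ with hx₂
  have hsoc₁ : ∀ y ∈ maximalIdeal S, y • x₁ = 0 := by
    intro y hy
    have hyr : y.r ∈ maximalIdeal R := (RIab.mem_maximalIdeal_iff y).mp hy
    have hyi : y.i ∈ maximalIdeal R := hIm y.hi
    show y * x₁ = 0
    refine RIab.ext ?_ ?_
    · show y.r * ε - b * (y.i * 0) = 0
      rw [mul_zero, mul_zero, sub_zero, mul_comm, hεm y.r hyr]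
    · show y.r * 0 + ε * y.i - a * (y.i * 0) = 0
      rw [mul_zero, mul_zero, mul_zero, zero_add, sub_zero, hεm y.i hyi]
  have hsoc₂ : ∀ y ∈ maximalIdeal S, y • x₂ = 0 := by
    intro y hy
    have hyr : y.r ∈ maximalIdeal R := (RIab.mem_maximalIdeal_iff y).mp hy
    have hyi : y.i ∈ maximalIdeal R := hIm y.hi
    show y * x₂ = 0
    have hie : y.i * ε = 0 := by rw [mul_comm]; exact hεm y.i hyi
    refine RIab.ext ?_ ?_
    · show y.r * 0 - b * (y.i * ε) = 0
      rw [mul_zero, hie, mul_zero, sub_zero]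
    · show y.r * ε + 0 * y.i - a * (y.i * ε) = 0
      rw [hie, mul_zero, sub_zero, zero_mul, add_zero, mul_comm, hεm y.r hyr]
  -- the Hom-module
  let K : ModuleCat.{u} S := ModuleCat.of S (ResidueField S)
  let MS : ModuleCat.{u} S := ModuleCat.of S S
  let φ₁ : K ⟶ MS := ModuleCat.ofHom <| Submodule.liftQ (maximalIdeal S) (LinearMap.toSpanSingleton S S x₁)
      (fun y hy => LinearMap.mem_ker.mpr (hsoc₁ y hy))
  let φ₂ : K ⟶ MS := ModuleCat.ofHom <| Submodule.liftQ (maximalIdeal S) (LinearMap.toSpanSingleton S S x₂)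
      (fun y hy => LinearMap.mem_ker.mpr (hsoc₂ y hy))
  have hφ₁one : φ₁ (Submodule.Quotient.mk 1) = x₁ := by
    show (1 : S) • x₁ = x₁
    rw [one_smul]
  have hφ₂one : φ₂ (Submodule.Quotient.mk 1) = x₂ := by
    show (1 : S) • x₂ = x₂
    rw [one_smul]
  have hφ1ne : φ₁ ≠ 0 := by
    intro h
    rw [h] at hφ₁one
    exact hε0 (congrArg RIab.r hφ₁one).symm
  have hφ2notmem : φ₂ ∉ Submodule.span S {φ₁} := by
    intro hmem
    rw [Submodule.mem_span_singleton] at hmem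
    obtain ⟨u, hu⟩ := hmem
    have h1 : (u • φ₁) (Submodule.Quotient.mk 1) = φ₂ (Submodule.Quotient.mk 1) := by rw [hu]
    replace h1 : u • x₁ = x₂ := by rw [← hφ₁one, ← hφ₂one]; exact h1
    have h2 : (u • x₁).i = x₂.i := congrArg RIab.i h1
    have h3 : (u * x₁).i = ε := h2
    have h4 : u.r * 0 + ε * u.i - a * (u.i * 0) = ε := h3
    rw [mul_zero, mul_zero, mul_zero, zero_add, sub_zero, hεm u.i (hIm u.hi)] at h4
    exact hε0 h4.symm
  -- a chain of length 2 in the submodule lattice of the Hom-module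
  have h01 : (⊥ : Submodule S (K ⟶ MS)) < Submodule.span S {φ₁} := by
    rw [bot_lt_iff_ne_bot, Ne, Submodule.span_singleton_eq_bot]
    exact hφ1ne
  have h12 : Submodule.span S {φ₁} < Submodule.span S ({φ₁, φ₂} : Set (K ⟶ MS)) := by
    refine lt_of_le_of_ne (Submodule.span_mono (by simp)) fun h => hφ2notmem ?_
    rw [h]
    exact Submodule.subset_span (by simp)
  let p0 : LTSeries (Submodule S (K ⟶ MS)) := RelSeries.singleton _ ⊥
  let p1 : LTSeries (Submodule S (K ⟶ MS)) := p0.snoc _ h01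
  let p2 : LTSeries (Submodule S (K ⟶ MS)) := p1.snoc _ (by
    have hl : p1.last = Submodule.span S {φ₁} := RelSeries.last_snoc _ _ _
    rw [hl]
    exact h12)
  have hlen2 : p2.length = 2 := rfl
  have hlb : (2 : WithBot ℕ∞) ≤ Order.krullDim (Submodule S (K ⟶ MS)) := by
    have := Order.LTSeries.length_le_krullDim p2
    rwa [hlen2] at this
  -- transfer along `Ext⁰ ≅ Hom`
  have e : (extResidue S S 0 : Type u) ≃ₗ[S] (K ⟶ MS) := (extZeroIso S K MS).toLinearEquiv
  have hdim : Order.krullDim (Submodule S (extResidue S S 0)) =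
      Order.krullDim (Submodule S (K ⟶ MS)) :=
    Order.krullDim_eq_of_orderIso (Submodule.orderIsoMapComap e)
  have hge : (2 : WithBot ℕ∞) ≤ Order.krullDim (Submodule S (extResidue S S 0)) := by
    rw [hdim]; exact hlb
  unfold modLength at hType
  have hnebot : Order.krullDim (Submodule S (extResidue S S 0)) ≠ ⊥ := by
    intro hbot
    rw [hbot] at hge
    exact absurd hge (by simp)
  obtain ⟨d, hd⟩ := WithBot.ne_bot_iff_exists.mp hnebot
  rw [← hd] at hge hType
  rw [WithBot.unbotD_coe] at hType
  rw [hType] at hge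
  exact absurd hge (by norm_num)
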